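/- arXiv:2407.09947 — 7 statements merged into one kernel-verified Lean document; each statement's English description precedes it below -/
import Mathlib

section
/- Let A be a Banach algebra and J a closed two-sided ideal of A. Then J is co-Rosenthal (i.e., J^⊥ ⊆ WAP(A)) if and only if the quotient Banach algebra A/J is Arens regular. -/
noncomputable section

open NormedSpace Filter Topology

namespace ArensNote

variable {X A : Type*} [NormedAddCommGroup X] [NormedSpace ℂ X]
  [NormedAddCommGroup A] [NormedSpace ℂ A]

/-- The bidual of a normed space. -/
abbrev Bidual (E : Type*) [NormedAddCommGroup E] [NormedSpace ℂ E] :=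
  StrongDual ℂ (StrongDual ℂ E)

/-- The canonical embedding of a normed space into its bidual. -/
abbrev iota (E : Type*) [NormedAddCommGroup E] [NormedSpace ℂ E] :
    E →L[ℂ] Bidual E :=
  inclusionInDoubleDual ℂ E

section action

variable (sm : X →L[ℂ] A →L[ℂ] X)

/-- First adjoint of a (right) module action `sm` of `A` on `X`:
`⟨fodot sm f x, φ⟩ = ⟨f, x·φ⟩`. -/
def fodot (f : StrongDual ℂ X) (x : X) : StrongDual ℂ A :=
  f.comp (sm x)

@[simp] lemma fodot_apply (f : StrongDual ℂ X) (x : X) (φ : A) :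
    fodot sm f x φ = f (sm x φ) := rfl

lemma fodot_add (f g : StrongDual ℂ X) (x : X) :
    fodot sm (f + g) x = fodot sm f x + fodot sm g x := by
  ext φ; simp

lemma fodot_smul (c : ℂ) (f : StrongDual ℂ X) (x : X) :
    fodot sm (c • f) x = c • fodot sm f x := by
  ext φ; simp

lemma fodot_norm_le (f : StrongDual ℂ X) (x : X) :
    ‖fodot sm f x‖ ≤ ‖f‖ * (‖sm‖ * ‖x‖) :=
  le_trans (ContinuousLinearMap.opNorm_comp_le f (sm x))
    (mul_le_mul_of_nonneg_left (sm.le_opNorm x) (norm_nonneg f))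

/-- Second adjoint of the module action: `⟨mdot sm m f, x⟩ = ⟨m, f ⊙ x⟩`. -/
def mdot (m : Bidual A) (f : StrongDual ℂ X) : StrongDual ℂ X :=
  LinearMap.mkContinuous
    { toFun := fun x => m (fodot sm f x)
      map_add' := by
        intro x y
        have h : fodot sm f (x + y) = fodot sm f x + fodot sm f y := by
          ext φ; simp
        show m (fodot sm f (x + y)) = m (fodot sm f x) + m (fodot sm f y)
        rw [h, map_add]
      map_smul' := by
        intro c x
        have h : fodot sm f (c • x) = c • fodot sm f x := by
          ext φ; simp
        show m (fodot sm f (c • x)) = (RingHom.id ℂ) c • m (fodot sm f x)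
        rw [h, map_smul, RingHom.id_apply] }
    (‖m‖ * ‖f‖ * ‖sm‖)
    (fun x => by
      calc ‖m (fodot sm f x)‖ ≤ ‖m‖ * ‖fodot sm f x‖ := m.le_opNorm _
        _ ≤ ‖m‖ * (‖f‖ * (‖sm‖ * ‖x‖)) :=
            mul_le_mul_of_nonneg_left (fodot_norm_le sm f x) (norm_nonneg m)
        _ = ‖m‖ * ‖f‖ * ‖sm‖ * ‖x‖ := by ring)

@[simp] lemma mdot_apply (m : Bidual A) (f : StrongDual ℂ X) (x : X) :
    mdot sm m f x = m (fodot sm f x) := rfl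

lemma mdot_add (m : Bidual A) (f g : StrongDual ℂ X) :
    mdot sm m (f + g) = mdot sm m f + mdot sm m g := by
  ext x; simp [fodot_add, map_add]

lemma mdot_smul (m : Bidual A) (c : ℂ) (f : StrongDual ℂ X) :
    mdot sm m (c • f) = c • mdot sm m f := by
  ext x; simp [fodot_smul, map_smul]

lemma mdot_norm_le (m : Bidual A) (f : StrongDual ℂ X) :
    ‖mdot sm m f‖ ≤ ‖m‖ * ‖f‖ * ‖sm‖ :=
  LinearMap.mkContinuous_norm_le _ (by positivity) _

/-- The bidual module action : `⟨modAct sm p m, f⟩ = ⟨p, m · f⟩`. -/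
def modAct (p : Bidual X) (m : Bidual A) : Bidual X :=
  LinearMap.mkContinuous
    { toFun := fun f => p (mdot sm m f)
      map_add' := by
        intro f g
        show p (mdot sm m (f + g)) = p (mdot sm m f) + p (mdot sm m g)
        rw [mdot_add, map_add]
      map_smul' := by
        intro c f
        show p (mdot sm m (c • f)) = (RingHom.id ℂ) c • p (mdot sm m f)
        rw [mdot_smul, map_smul, RingHom.id_apply] }
    (‖p‖ * ‖m‖ * ‖sm‖)
    (fun f => by
      calc ‖p (mdot sm m f)‖ ≤ ‖p‖ * ‖mdot sm m f‖ := p.le_opNorm _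
        _ ≤ ‖p‖ * (‖m‖ * ‖f‖ * ‖sm‖) :=
            mul_le_mul_of_nonneg_left (mdot_norm_le sm m f) (norm_nonneg p)
        _ = ‖p‖ * ‖m‖ * ‖sm‖ * ‖f‖ := by ring)

@[simp] lemma modAct_apply (p : Bidual X) (m : Bidual A) (f : StrongDual ℂ X) :
    modAct sm p m f = p (mdot sm m f) := rfl

end action

section algebra

variable (mA : A →L[ℂ] A →L[ℂ] A)

/-- The first Arens product on the bidual:
`⟨m □ n, f⟩ = ⟨m, n·f⟩`, `⟨n·f, φ⟩ = ⟨n, f·φ⟩`, `⟨f·φ, ψ⟩ = ⟨f, φψ⟩`. -/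
def arens1 (m n : Bidual A) : Bidual A := modAct mA m n

/-- The second Arens product on the bidual:
`⟨m ◇ n, f⟩ = ⟨n, f·m⟩`, `⟨f·m, φ⟩ = ⟨m, φ·f⟩`, `⟨φ·f, ψ⟩ = ⟨f, ψφ⟩`. -/
def arens2 (m n : Bidual A) : Bidual A := modAct mA.flip n m

/-- A Banach algebra is Arens regular when the two Arens products coincide. -/
def ArensRegular : Prop :=
  ∀ m n : Bidual A, arens1 mA m n = arens2 mA m n

/-- The weakly almost periodic functionals on `A`. -/
def WAP : Set (StrongDual ℂ A) :=
  {f | ∀ m n : Bidual A, arens1 mA m n f = arens2 mA m n f}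

/-- `e` is a mixed identity: a right identity for the first Arens product and a
left identity for the second Arens product. -/
def IsMixedIdentity (e : Bidual A) : Prop :=
  (∀ m : Bidual A, arens1 mA m e = m) ∧ ∀ m : Bidual A, arens2 mA e m = m

/-- `mA` makes `A` into a (non-unital) Banach algebra. -/
structure IsBanachAlgebra : Prop where
  mul_assoc : ∀ a b c : A, mA (mA a b) c = mA a (mA b c)
  norm_mul_le : ∀ a b : A, ‖mA a b‖ ≤ ‖a‖ * ‖b‖

/-- `J` is a two-sided ideal for the multiplication `mA`. -/
def IsTwoSidedIdeal (J : Set A) : Prop :=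
  ∀ a b : A, a ∈ J → mA a b ∈ J ∧ mA b a ∈ J

/-- `A` has a contractive (two-sided) approximate identity. -/
def HasCAI : Prop :=
  ∃ l : Filter A, l.NeBot ∧ (∀ᶠ x in l, ‖x‖ ≤ 1) ∧
    (∀ a : A, Tendsto (fun x => mA x a) l (𝓝 a)) ∧
    ∀ a : A, Tendsto (fun x => mA a x) l (𝓝 a)

/-- `A` has a bounded (two-sided) approximate identity. -/
def HasBAI : Prop :=
  ∃ l : Filter A, l.NeBot ∧ (∃ C : ℝ, ∀ᶠ x in l, ‖x‖ ≤ C) ∧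
    (∀ a : A, Tendsto (fun x => mA x a) l (𝓝 a)) ∧
    ∀ a : A, Tendsto (fun x => mA a x) l (𝓝 a)

/-- `A` has a bounded right approximate identity. -/
def HasBRAI : Prop :=
  ∃ l : Filter A, l.NeBot ∧ (∃ C : ℝ, ∀ᶠ x in l, ‖x‖ ≤ C) ∧
    ∀ a : A, Tendsto (fun x => mA a x) l (𝓝 a)

/-- `A` has a bounded left approximate identity. -/
def HasBLAI : Prop :=
  ∃ l : Filter A, l.NeBot ∧ (∃ C : ℝ, ∀ᶠ x in l, ‖x‖ ≤ C) ∧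
    ∀ a : A, Tendsto (fun x => mA x a) l (𝓝 a)

end algebra

/-- The annihilator `S^⊥ ⊆ A*` of a subset `S ⊆ A`. -/
def perp (S : Set A) : Set (StrongDual ℂ A) := {f | ∀ a ∈ S, f a = 0}

/-- The annihilator in the bidual of a set of functionals. -/
def perp' (S : Set (StrongDual ℂ A)) : Set (Bidual A) := {m | ∀ f ∈ S, m f = 0}

/-- `A` is weakly sequentially complete. -/
def WeaklySequentiallyComplete (E : Type*) [NormedAddCommGroup E] [NormedSpace ℂ E] : Prop :=
  ∀ x : ℕ → E,
    (∀ f : StrongDual ℂ E, ∃ c : ℂ, Tendsto (fun n => f (x n)) atTop (𝓝 c)) →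
    ∃ a : E, ∀ f : StrongDual ℂ E, Tendsto (fun n => f (x n)) atTop (𝓝 (f a))

/-- The restriction map `A* → J*`, adjoint of the inclusion `J → A`. -/
def restrictDual (J : Submodule ℂ A) : StrongDual ℂ A →L[ℂ] StrongDual ℂ ↥J :=
  (ContinuousLinearMap.compL ℂ ↥J A ℂ).flip J.subtypeL

@[simp] lemma restrictDual_apply (J : Submodule ℂ A) (f : StrongDual ℂ A) (x : ↥J) :
    restrictDual J f x = f x := rfl

/-- The second adjoint `J** → A**` of the inclusion of a closed subspace `J` into `A`. -/
def bidualTrans (J : Submodule ℂ A) (m : Bidual ↥J) : Bidual A :=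
  m.comp (restrictDual J)

@[simp] lemma bidualTrans_apply (J : Submodule ℂ A) (m : Bidual ↥J) (f : StrongDual ℂ A) :
    bidualTrans J m f = m (restrictDual J f) := rfl

/-- The subspace `X × {0}` of the `ℓ¹`-direct sum `X ⊕₁ B`. -/
def sndZero (X B : Type*) [NormedAddCommGroup X] [NormedSpace ℂ X]
    [NormedAddCommGroup B] [NormedSpace ℂ B] : Submodule ℂ (WithLp 1 (X × B)) :=
  (Submodule.prod (⊤ : Submodule ℂ X) (⊥ : Submodule ℂ B)).comap
    (WithLp.linearEquiv 1 ℂ (X × B)).toLinearMap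

section quot

variable {A C : Type*} [NormedAddCommGroup A] [NormedSpace ℂ A]
  [NormedAddCommGroup C] [NormedSpace ℂ C]

/-- The adjoint of `π : A → C`, sending `g : C*` to `g ∘ π : A*`. -/
def pdual (π : A →L[ℂ] C) : StrongDual ℂ C →L[ℂ] StrongDual ℂ A :=
  (ContinuousLinearMap.compL ℂ A C ℂ).flip π

@[simp] lemma pdual_apply (π : A →L[ℂ] C) (g : StrongDual ℂ C) (a : A) :
    pdual π g a = g (π a) := rfl

/-- The second adjoint `A** → C**`. -/
def pbidual (π : A →L[ℂ] C) (m : Bidual A) : Bidual C :=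
  m.comp (pdual π)

@[simp] lemma pbidual_apply (π : A →L[ℂ] C) (m : Bidual A) (g : StrongDual ℂ C) :
    pbidual π m g = m (pdual π g) := rfl

variable (π : A →L[ℂ] C)

lemma exists_lift_norm_lt (hπsurj : Function.Surjective π)
    (hπnorm : ∀ c : C, ‖c‖ = sInf {r : ℝ | ∃ a : A, π a = c ∧ ‖a‖ = r})
    (c : C) {ε : ℝ} (hε : 0 < ε) :
    ∃ a : A, π a = c ∧ ‖a‖ < ‖c‖ + ε := by
  obtain ⟨a0, ha0⟩ := hπsurj c
  have hne : Set.Nonempty {r : ℝ | ∃ a : A, π a = c ∧ ‖a‖ = r} := ⟨‖a0‖, a0, ha0, rfl⟩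
  have hlt : sInf {r : ℝ | ∃ a : A, π a = c ∧ ‖a‖ = r} < ‖c‖ + ε := by
    rw [← hπnorm]; linarith
  obtain ⟨r, ⟨a, ha, har⟩, hr⟩ := exists_lt_of_csInf_lt hne hlt
  exact ⟨a, ha, har ▸ hr⟩

lemma le_of_lifts (hπsurj : Function.Surjective π)
    (hπnorm : ∀ c : C, ‖c‖ = sInf {r : ℝ | ∃ a : A, π a = c ∧ ‖a‖ = r})
    {v K : ℝ} (hK : 0 ≤ K) (c : C)
    (h : ∀ a : A, π a = c → v ≤ K * ‖a‖) : v ≤ K * ‖c‖ := by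
  rcases eq_or_lt_of_le hK with hK0 | hK0
  · obtain ⟨a, ha, -⟩ := exists_lift_norm_lt π hπsurj hπnorm c one_pos
    have hv := h a ha
    rw [← hK0] at hv ⊢
    simpa using hv
  · refine le_of_forall_pos_le_add fun ε hε => ?_
    obtain ⟨a, ha, hna⟩ := exists_lift_norm_lt π hπsurj hπnorm c (div_pos hε hK0)
    calc v ≤ K * ‖a‖ := h a ha
      _ ≤ K * (‖c‖ + ε / K) := by nlinarith
      _ = K * ‖c‖ + ε := by
          rw [mul_add, mul_div_cancel₀ _ (ne_of_gt hK0)]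

lemma pdual_norm_ge (hπsurj : Function.Surjective π)
    (hπnorm : ∀ c : C, ‖c‖ = sInf {r : ℝ | ∃ a : A, π a = c ∧ ‖a‖ = r})
    (g : StrongDual ℂ C) : ‖g‖ ≤ ‖pdual π g‖ := by
  refine g.opNorm_le_bound (norm_nonneg _) fun c => ?_
  refine le_of_lifts π hπsurj hπnorm (norm_nonneg _) c fun a ha => ?_
  calc ‖g c‖ = ‖pdual π g a‖ := by rw [pdual_apply, ha]
    _ ≤ ‖pdual π g‖ * ‖a‖ := (pdual π g).le_opNorm a

lemma pbidual_surjective (hπsurj : Function.Surjective π)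
    (hπnorm : ∀ c : C, ‖c‖ = sInf {r : ℝ | ∃ a : A, π a = c ∧ ‖a‖ = r}) :
    Function.Surjective (pbidual π) := by
  intro M
  have hinj : Function.Injective ((pdual π).toLinearMap) := by
    intro g h hgh
    have h1 : ‖g - h‖ ≤ ‖pdual π (g - h)‖ := pdual_norm_ge π hπsurj hπnorm _
    rw [map_sub] at h1
    have : pdual π g - pdual π h = 0 := by
      rw [show (pdual π).toLinearMap g = pdual π g from rfl] at hgh
      rw [hgh]; exact sub_self _
    rw [this, norm_zero] at h1
    exact sub_eq_zero.mp (norm_le_zero_iff.mp h1)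
  let e := LinearEquiv.ofInjective ((pdual π).toLinearMap) hinj
  let R := LinearMap.range ((pdual π).toLinearMap)
  have hecoe : ∀ g : StrongDual ℂ C, ((e g : R) : StrongDual ℂ A) = pdual π g := fun g => rfl
  let Λ₀ : R →ₗ[ℂ] ℂ := M.toLinearMap.comp (e.symm.toLinearMap)
  have hΛ₀ : ∀ h : R, ‖Λ₀ h‖ ≤ ‖M‖ * ‖(h : StrongDual ℂ A)‖ := by
    intro h
    have key : pdual π (e.symm h) = (h : StrongDual ℂ A) := by
      conv_rhs => rw [← e.apply_symm_apply h]
      exact (hecoe _).symm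
    calc ‖Λ₀ h‖ = ‖M (e.symm h)‖ := rfl
      _ ≤ ‖M‖ * ‖e.symm h‖ := M.le_opNorm _
      _ ≤ ‖M‖ * ‖pdual π (e.symm h)‖ :=
          mul_le_mul_of_nonneg_left (pdual_norm_ge π hπsurj hπnorm _) (norm_nonneg M)
      _ = ‖M‖ * ‖(h : StrongDual ℂ A)‖ := by rw [key]
  let Λ : R →L[ℂ] ℂ := LinearMap.mkContinuous (E := R) Λ₀ ‖M‖ hΛ₀
  obtain ⟨m, hm, -⟩ := exists_extension_norm_eq R Λ
  refine ⟨m, ?_⟩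
  ext g
  calc pbidual π m g = m ((e g : R) : StrongDual ℂ A) := by rw [pbidual_apply, hecoe]
    _ = Λ (e g) := hm (e g)
    _ = M (e.symm (e g)) := rfl
    _ = M g := by rw [e.symm_apply_apply]

lemma exists_pdual_eq (hπsurj : Function.Surjective π)
    (hπnorm : ∀ c : C, ‖c‖ = sInf {r : ℝ | ∃ a : A, π a = c ∧ ‖a‖ = r})
    (f : StrongDual ℂ A) (hf : ∀ a : A, π a = 0 → f a = 0) :
    ∃ g : StrongDual ℂ C, pdual π g = f := by
  let s := Function.surjInv hπsurj
  have hs : ∀ c : C, π (s c) = c := fun c => Function.surjInv_eq hπsurj c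
  have key : ∀ (c : C) (a : A), π a = c → f (s c) = f a := by
    intro c a ha
    have h0 : f (s c - a) = 0 := hf _ (by rw [map_sub, hs, ha, sub_self])
    rw [map_sub, sub_eq_zero] at h0
    exact h0
  let g₀ : C →ₗ[ℂ] ℂ :=
    { toFun := fun c => f (s c)
      map_add' := fun c d => by
        show f (s (c + d)) = f (s c) + f (s d)
        have := key (c + d) (s c + s d) (by rw [map_add, hs, hs])
        rw [this, map_add]
      map_smul' := fun r c => by
        show f (s (r • c)) = (RingHom.id ℂ) r • f (s c)
        have := key (r • c) (r • s c) (by rw [map_smul, hs])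
        rw [this, map_smul, RingHom.id_apply] }
  have hb : ∀ c : C, ‖g₀ c‖ ≤ ‖f‖ * ‖c‖ := by
    intro c
    refine le_of_lifts π hπsurj hπnorm (norm_nonneg f) c fun a ha => ?_
    show ‖f (s c)‖ ≤ _
    rw [key c a ha]
    exact f.le_opNorm a
  refine ⟨LinearMap.mkContinuous g₀ ‖f‖ hb, ?_⟩
  ext a
  exact key (π a) a rfl

end quot

section pull

variable {A C : Type*} [NormedAddCommGroup A] [NormedSpace ℂ A]
  [NormedAddCommGroup C] [NormedSpace ℂ C]
  (π : A →L[ℂ] C) (mA : A →L[ℂ] A →L[ℂ] A) (mC : C →L[ℂ] C →L[ℂ] C)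

lemma fodot_pull (hm : ∀ a b : A, π (mA a b) = mC (π a) (π b))
    (g : StrongDual ℂ C) (a : A) :
    pdual π (fodot mC g (π a)) = fodot mA (pdual π g) a := by
  ext b
  simp [hm]

lemma mdot_pull (hm : ∀ a b : A, π (mA a b) = mC (π a) (π b))
    (n : Bidual A) (g : StrongDual ℂ C) :
    pdual π (mdot mC (pbidual π n) g) = mdot mA n (pdual π g) := by
  ext a
  show (mdot mC (pbidual π n) g) (π a) = n (fodot mA (pdual π g) a)
  rw [mdot_apply, pbidual_apply, fodot_pull π mA mC hm]

lemma arens1_pull (hm : ∀ a b : A, π (mA a b) = mC (π a) (π b))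
    (m n : Bidual A) (g : StrongDual ℂ C) :
    arens1 mC (pbidual π m) (pbidual π n) g = arens1 mA m n (pdual π g) := by
  show (pbidual π m) (mdot mC (pbidual π n) g) = m (mdot mA n (pdual π g))
  rw [pbidual_apply, mdot_pull π mA mC hm]

lemma arens2_pull (hm : ∀ a b : A, π (mA.flip a b) = mC.flip (π a) (π b))
    (m n : Bidual A) (g : StrongDual ℂ C) :
    arens2 mC (pbidual π m) (pbidual π n) g = arens2 mA m n (pdual π g) := by
  show (pbidual π n) (mdot mC.flip (pbidual π m) g) = n (mdot mA.flip m (pdual π g))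
  rw [pbidual_apply, mdot_pull π mA.flip mC.flip hm]

end pull

/-- Let `A` be a Banach algebra and `J` a closed two-sided ideal of `A`.
Then `J` is co-Rosenthal (i.e. `J^⊥ ⊆ WAP(A)`) if and only if the quotient Banach
algebra `A/J` (presented here as a Banach algebra `C` together with the quotient map
`π : A → C`) is Arens regular. -/
theorem statement0
    {A : Type*} [NormedAddCommGroup A] [NormedSpace ℂ A] [CompleteSpace A]
    (mA : A →L[ℂ] A →L[ℂ] A) (hA : IsBanachAlgebra mA)
    (J : Submodule ℂ A) (hJclosed : IsClosed (J : Set A))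
    (hJideal : IsTwoSidedIdeal mA (J : Set A))
    -- a realization of the quotient Banach algebra `A/J`:
    {C : Type*} [NormedAddCommGroup C] [NormedSpace ℂ C] [CompleteSpace C]
    (mC : C →L[ℂ] C →L[ℂ] C) (π : A →L[ℂ] C)
    (hπsurj : Function.Surjective π)
    (hπker : ∀ a : A, π a = 0 ↔ a ∈ J)
    (hπmul : ∀ a b : A, π (mA a b) = mC (π a) (π b))
    (hπnorm : ∀ c : C, ‖c‖ = sInf {r : ℝ | ∃ a : A, π a = c ∧ ‖a‖ = r}) :
    perp (J : Set A) ⊆ WAP mA ↔ ArensRegular mC := by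
  have hm2 : ∀ a b : A, π (mA.flip a b) = mC.flip (π a) (π b) := by
    intro a b
    simp only [ContinuousLinearMap.flip_apply]
    exact hπmul b a
  constructor
  · intro hWAP M N
    obtain ⟨m, rfl⟩ := pbidual_surjective π hπsurj hπnorm M
    obtain ⟨n, rfl⟩ := pbidual_surjective π hπsurj hπnorm N
    ext g
    have hperp : pdual π g ∈ perp (J : Set A) := by
      intro a ha
      show g (π a) = 0
      rw [(hπker a).mpr ha, map_zero]
    rw [arens1_pull π mA mC hπmul, arens2_pull π mA mC hm2]
    exact hWAP hperp m n
  · intro hreg f hf m n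
    obtain ⟨g, rfl⟩ := exists_pdual_eq π hπsurj hπnorm f
      (fun a ha => hf a ((hπker a).mp ha))
    rw [← arens1_pull π mA mC hπmul, ← arens2_pull π mA mC hm2,
      hreg (pbidual π m) (pbidual π n)]

end ArensNote
end
end

section
/- Let A be a Banach algebra, J a closed two-sided ideal of A, and i : J → A the inclusion map with adjoint i* : A* → J* and second adjoint i** : J** → A**. Then J is co-Rosenthal (i.e., J^⊥ ⊆ WAP(A)) if and only if i**( (i*(WAP(A)))^⊥ ) = WAP(A)^⊥, where (i*(WAP(A)))^⊥ = {m∈J** : ⟨m, i*(f)⟩=0 for all f∈WAP(A)} and WAP(A)^⊥ = {m∈A** : ⟨m,f⟩=0 for all f∈WAP(A)}. -/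
noncomputable section

open NormedSpace Filter Topology

namespace ArensNote

variable {X A : Type*} [NormedAddCommGroup X] [NormedSpace ℂ X]
  [NormedAddCommGroup A] [NormedSpace ℂ A]

/-- Auxiliary: the WAP functionals form a submodule. -/
def WAPsub {A : Type*} [NormedAddCommGroup A] [NormedSpace ℂ A]
    (mA : A →L[ℂ] A →L[ℂ] A) : Submodule ℂ (StrongDual ℂ A) where
  carrier := WAP mA
  add_mem' := by
    intro f g hf hg m n
    simp only [map_add]
    rw [hf m n, hg m n]
  zero_mem' := by intro m n; simp
  smul_mem' := by
    intro c f hf m n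
    simp only [map_smul]
    rw [hf m n]

lemma WAPsub_closed {A : Type*} [NormedAddCommGroup A] [NormedSpace ℂ A]
    (mA : A →L[ℂ] A →L[ℂ] A) : IsClosed ((WAPsub mA : Set (StrongDual ℂ A))) := by
  have h : ((WAPsub mA : Set (StrongDual ℂ A))) =
      ⋂ (m : Bidual A) (n : Bidual A), {f | arens1 mA m n f = arens2 mA m n f} := by
    ext f
    simp only [Set.mem_iInter, Set.mem_setOf_eq]
    rfl
  rw [h]
  exact isClosed_iInter fun m => isClosed_iInter fun n =>
    isClosed_eq (arens1 mA m n).continuous (arens2 mA m n).continuous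

/-- Hahn-Banach separation from the closed subspace `WAP mA`. -/
lemma exists_functional_of_not_mem_WAP {A : Type*} [NormedAddCommGroup A]
    [NormedSpace ℂ A] (mA : A →L[ℂ] A →L[ℂ] A) {f : StrongDual ℂ A}
    (hf : f ∉ WAP mA) : ∃ m : Bidual A, (∀ g ∈ WAP mA, m g = 0) ∧ m f ≠ 0 := by
  set W := WAPsub mA
  haveI : IsClosed ((W : Set (StrongDual ℂ A))) := WAPsub_closed mA
  let π : StrongDual ℂ A →L[ℂ] (StrongDual ℂ A ⧸ W) :=
    ⟨W.mkQ, W.continuous_mkQ⟩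
  have hπ : ∀ g : StrongDual ℂ A, π g = Submodule.Quotient.mk g := fun g => rfl
  have hne : π f ≠ 0 := by
    rw [hπ]
    intro h0
    exact hf ((Submodule.Quotient.mk_eq_zero W).mp h0)
  obtain ⟨g, _, hgx⟩ := exists_dual_vector ℂ (π f) ((norm_ne_zero_iff (E := StrongDual ℂ A ⧸ W)).mpr hne)
  refine ⟨g.comp π, ?_, ?_⟩
  · intro h hh
    have : π h = 0 := by rw [hπ]; exact (Submodule.Quotient.mk_eq_zero W).mpr hh
    simp [this]
  · have : g (π f) = ‖π f‖ := hgx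
    simp only [ContinuousLinearMap.comp_apply, this]
    exact_mod_cast (norm_ne_zero_iff (E := StrongDual ℂ A ⧸ W)).mpr hne

/-- Let `A` be a Banach algebra, `J` a closed two-sided ideal of `A`,
`i : J → A` the inclusion with adjoint `i* : A* → J*` (`restrictDual J`) and second
adjoint `i** : J** → A**` (`bidualTrans J`).  Then `J` is co-Rosenthal
(`J^⊥ ⊆ WAP(A)`) iff `i**((i*(WAP(A)))^⊥) = WAP(A)^⊥`. -/
theorem statement1
    {A : Type*} [NormedAddCommGroup A] [NormedSpace ℂ A] [CompleteSpace A]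
    (mA : A →L[ℂ] A →L[ℂ] A) (hA : IsBanachAlgebra mA)
    (J : Submodule ℂ A) (hJclosed : IsClosed (J : Set A))
    (hJideal : IsTwoSidedIdeal mA (J : Set A)) :
    perp (J : Set A) ⊆ WAP mA ↔
      bidualTrans J '' {m : Bidual ↥J | ∀ f ∈ WAP mA, m (restrictDual J f) = 0}
        = perp' (WAP mA) := by
  classical
  constructor
  · -- co-Rosenthal implies the image equality
    intro h
    -- choose norm-preserving extensions
    have hext := fun g : StrongDual ℂ ↥J => exists_extension_norm_eq (𝕜 := ℂ) J g
    choose ext hext1 hext2 using hext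
    have hrestr : ∀ g : StrongDual ℂ ↥J, restrictDual J (ext g) = g := by
      intro g; ext x; exact hext1 g x
    apply Set.Subset.antisymm
    · rintro m ⟨n, hn, rfl⟩ f hf
      exact hn f hf
    · intro m hm
      -- m vanishes on J^⊥ since J^⊥ ⊆ WAP
      have key : ∀ F G : StrongDual ℂ A, restrictDual J F = restrictDual J G → m F = m G := by
        intro F G hFG
        have hperp : F - G ∈ perp (J : Set A) := by
          intro a ha
          have := congrArg (fun φ => φ (⟨a, ha⟩ : ↥J)) hFG
          simpa [sub_eq_zero] using this
        have : m (F - G) = 0 := hm _ (h hperp)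
        have := this
        rw [map_sub, sub_eq_zero] at this
        exact this
      -- build n : J** with i** n = m
      let nlin : StrongDual ℂ ↥J →ₗ[ℂ] ℂ :=
        { toFun := fun g => m (ext g)
          map_add' := by
            intro g₁ g₂
            show m (ext (g₁ + g₂)) = m (ext g₁) + m (ext g₂)
            have : m (ext (g₁ + g₂)) = m (ext g₁ + ext g₂) := by
              apply key
              rw [map_add, hrestr, hrestr, hrestr]
            rw [this, map_add]
          map_smul' := by
            intro c g
            show m (ext (c • g)) = (RingHom.id ℂ) c • m (ext g)
            have : m (ext (c • g)) = m (c • ext g) := by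
              apply key
              rw [map_smul, hrestr, hrestr]
            rw [this, map_smul, RingHom.id_apply] }
      let n : Bidual ↥J := LinearMap.mkContinuous nlin ‖m‖ (fun g => by
        calc ‖m (ext g)‖ ≤ ‖m‖ * ‖ext g‖ := m.le_opNorm _
          _ = ‖m‖ * ‖g‖ := by rw [hext2])
      have hcomp : ∀ f : StrongDual ℂ A, n (restrictDual J f) = m f := by
        intro f
        show m (ext (restrictDual J f)) = m f
        apply key
        rw [hrestr]
      refine ⟨n, ?_, ?_⟩
      · intro f hf
        rw [hcomp f]
        exact hm f hf
      · ext f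
        exact hcomp f
  · -- image equality implies co-Rosenthal
    intro heq f hf
    by_contra hW
    obtain ⟨m, hm0, hmf⟩ := exists_functional_of_not_mem_WAP mA hW
    have hm : m ∈ perp' (WAP mA) := hm0
    rw [← heq] at hm
    obtain ⟨n, _, rfl⟩ := hm
    apply hmf
    have hr : restrictDual J f = 0 := by
      ext x
      exact hf x.1 x.2
    show n (restrictDual J f) = 0
    rw [hr, map_zero]


end ArensNote
end
end

section
/- Let A be a Banach algebra, J a closed two-sided ideal of A, ι : A → A** the canonical embedding, and identify J** with J^⊥⊥ ⊆ A**. If e and f are two mixed identities of A** and e □ J^⊥⊥ = ι(J), then also f □ J^⊥⊥ = ι(J). In other words, the property of being a Riesz ideal does not depend on the choice of the mixed identity. -/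
noncomputable section

open NormedSpace Filter Topology

namespace ArensNote

variable {X A : Type*} [NormedAddCommGroup X] [NormedSpace ℂ X]
  [NormedAddCommGroup A] [NormedSpace ℂ A]

/-- The first Arens product is associative. -/
lemma arens1_assoc' {A : Type*} [NormedAddCommGroup A] [NormedSpace ℂ A]
    (mA : A →L[ℂ] A →L[ℂ] A) (hA : IsBanachAlgebra mA) (m n p : Bidual A) :
    arens1 mA (arens1 mA m n) p = arens1 mA m (arens1 mA n p) := by
  ext g
  show (arens1 mA m n) (mdot mA p g) = m (mdot mA (arens1 mA n p) g)
  show m (mdot mA n (mdot mA p g)) = m (mdot mA (arens1 mA n p) g)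
  congr 1
  ext φ
  show n (fodot mA (mdot mA p g) φ) = (arens1 mA n p) (fodot mA g φ)
  show n (fodot mA (mdot mA p g) φ) = n (mdot mA p (fodot mA g φ))
  congr 1
  ext ψ
  show (mdot mA p g) (mA φ ψ) = p (fodot mA (fodot mA g φ) ψ)
  show p (fodot mA g (mA φ ψ)) = p (fodot mA (fodot mA g φ) ψ)
  congr 1
  ext χ
  show g (mA (mA φ ψ) χ) = g (mA φ (mA ψ χ))
  rw [hA.mul_assoc]

/-- The two Arens products agree when the right factor comes from `A`. -/
lemma arens1_iota_right {A : Type*} [NormedAddCommGroup A] [NormedSpace ℂ A]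
    (mA : A →L[ℂ] A →L[ℂ] A) (m : Bidual A) (a : A) :
    arens1 mA m (iota A a) = arens2 mA m (iota A a) := by
  ext g
  show m (mdot mA (iota A a) g) = (iota A a) (mdot mA.flip m g)
  have h1 : (iota A a) (mdot mA.flip m g) = m (fodot mA.flip g a) := rfl
  rw [h1]
  congr 1

/-- Being a Riesz ideal does not depend on the choice of mixed identity:
if `e` and `f` are mixed identities of `A**` and `e □ J^⊥⊥ = ι(J)`, then also
`f □ J^⊥⊥ = ι(J)`. -/
theorem statement3
    {A : Type*} [NormedAddCommGroup A] [NormedSpace ℂ A] [CompleteSpace A]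
    (mA : A →L[ℂ] A →L[ℂ] A) (hA : IsBanachAlgebra mA)
    (J : Submodule ℂ A) (hJclosed : IsClosed (J : Set A))
    (hJideal : IsTwoSidedIdeal mA (J : Set A))
    (e f : Bidual A)
    (he : IsMixedIdentity mA e) (hf : IsMixedIdentity mA f)
    (hRiesz : (fun m => arens1 mA e m) '' perp' (perp (J : Set A))
      = iota A '' (J : Set A)) :
    (fun m => arens1 mA f m) '' perp' (perp (J : Set A)) = iota A '' (J : Set A) := by
  have hfi : ∀ a : A, arens1 mA f (iota A a) = iota A a := fun a => by
    rw [arens1_iota_right, hf.2]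
  apply Set.Subset.antisymm
  · rintro _ ⟨m, hm, rfl⟩
    have h1 : arens1 mA e m ∈ iota A '' (J : Set A) := by
      rw [← hRiesz]; exact ⟨m, hm, rfl⟩
    obtain ⟨a, ha, hae⟩ := h1
    refine ⟨a, ha, ?_⟩
    calc iota A a = arens1 mA f (iota A a) := (hfi a).symm
      _ = arens1 mA f (arens1 mA e m) := by rw [hae]
      _ = arens1 mA (arens1 mA f e) m := (arens1_assoc' mA hA f e m).symm
      _ = arens1 mA f m := by rw [he.1]
  · rintro _ ⟨a, ha, rfl⟩
    refine ⟨iota A a, ?_, hfi a⟩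
    intro g hg
    exact hg a ha

end ArensNote
end
end

section
/- Let B be a Banach algebra and X a right Banach B-module such that the induced right B**-module action on X** is not Arens regular, i.e., there exists p ∈ X** for which the map m ↦ pm : (B**, weak*) → (X**, weak*) is not continuous. Then the Banach algebra B_X = X ⊕₁ B with product (x,φ)(y,ψ) = (xψ, φψ) is not Arens regular. In particular (taking J = X×{0}, so that J and B_X/J ≅ B), if in addition B is Arens regular, then B_X is a Banach algebra containing a closed ideal J such that J and B_X/J are Arens regular while B_X is not: Arens regularity is not a three-space property. -/
noncomputable section

open NormedSpace Filter Topology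

namespace ArensNote

variable {X A : Type*} [NormedAddCommGroup X] [NormedSpace ℂ X]
  [NormedAddCommGroup A] [NormedSpace ℂ A]

section aux

variable {Y C : Type*} [NormedAddCommGroup Y] [NormedSpace ℂ Y]
  [NormedAddCommGroup C] [NormedSpace ℂ C]

/-- Precomposition with `σ` as a map of duals. -/
def precomp (σ : Y →L[ℂ] C) : StrongDual ℂ C →L[ℂ] StrongDual ℂ Y :=
  (ContinuousLinearMap.compL ℂ Y C ℂ).flip σ

@[simp] lemma precomp_apply (σ : Y →L[ℂ] C) (G : StrongDual ℂ C) (y : Y) :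
    precomp σ G y = G (σ y) := rfl

/-- The second adjoint of `σ`. -/
def bidualMap (σ : Y →L[ℂ] C) (m : Bidual Y) : Bidual C :=
  m.comp (precomp σ)

@[simp] lemma bidualMap_apply (σ : Y →L[ℂ] C) (m : Bidual Y) (G : StrongDual ℂ C) :
    bidualMap σ m G = m (precomp σ G) := rfl

lemma arens1_natural (mY : Y →L[ℂ] Y →L[ℂ] Y) (mC : C →L[ℂ] C →L[ℂ] C)
    (σ : Y →L[ℂ] C) (hσ : ∀ φ ψ : Y, mC (σ φ) (σ ψ) = σ (mY φ ψ))
    (m n : Bidual Y) :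
    arens1 mC (bidualMap σ m) (bidualMap σ n) = bidualMap σ (arens1 mY m n) := by
  have h1 : ∀ (G : StrongDual ℂ C) (φ : Y),
      precomp σ (fodot mC G (σ φ)) = fodot mY (precomp σ G) φ := by
    intro G φ; ext ψ; simp [hσ]
  have h2 : ∀ G : StrongDual ℂ C,
      precomp σ (mdot mC (bidualMap σ n) G) = mdot mY n (precomp σ G) := by
    intro G; ext φ
    simp only [precomp_apply, mdot_apply, bidualMap_apply, h1]
  ext G
  simp only [arens1, modAct_apply, bidualMap_apply, h2]

lemma arens2_natural (mY : Y →L[ℂ] Y →L[ℂ] Y) (mC : C →L[ℂ] C →L[ℂ] C)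
    (σ : Y →L[ℂ] C) (hσ : ∀ φ ψ : Y, mC (σ φ) (σ ψ) = σ (mY φ ψ))
    (m n : Bidual Y) :
    arens2 mC (bidualMap σ m) (bidualMap σ n) = bidualMap σ (arens2 mY m n) := by
  have h1 : ∀ (G : StrongDual ℂ C) (φ : Y),
      precomp σ (fodot mC.flip G (σ φ)) = fodot mY.flip (precomp σ G) φ := by
    intro G φ; ext ψ
    simp [ContinuousLinearMap.flip_apply, hσ]
  have h2 : ∀ G : StrongDual ℂ C,
      precomp σ (mdot mC.flip (bidualMap σ m) G) = mdot mY.flip m (precomp σ G) := by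
    intro G; ext φ
    simp only [precomp_apply, mdot_apply, bidualMap_apply, h1]
  ext G
  simp only [arens2, modAct_apply, bidualMap_apply, h2]

/-- Arens regularity transfers along a surjective-on-biduals algebra morphism. -/
lemma arensRegular_of_morphism (mY : Y →L[ℂ] Y →L[ℂ] Y) (mC : C →L[ℂ] C →L[ℂ] C)
    (σ : Y →L[ℂ] C) (hσ : ∀ φ ψ : Y, mC (σ φ) (σ ψ) = σ (mY φ ψ))
    (hsurj : Function.Surjective (bidualMap σ))
    (hreg : ArensRegular mY) : ArensRegular mC := by
  intro M N
  obtain ⟨m, rfl⟩ := hsurj M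
  obtain ⟨n, rfl⟩ := hsurj N
  rw [arens1_natural mY mC σ hσ, arens2_natural mY mC σ hσ, hreg]

end aux

section prodmaps

variable (X B : Type*) [NormedAddCommGroup X] [NormedSpace ℂ X]
  [NormedAddCommGroup B] [NormedSpace ℂ B]

/-- The inclusion `X → X ⊕₁ B`. -/
def inl1 : X →L[ℂ] WithLp 1 (X × B) :=
  (WithLp.prodContinuousLinearEquiv 1 ℂ X B).symm.toContinuousLinearMap.comp
    (ContinuousLinearMap.inl ℂ X B)

/-- The inclusion `B → X ⊕₁ B`. -/
def inr1 : B →L[ℂ] WithLp 1 (X × B) :=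
  (WithLp.prodContinuousLinearEquiv 1 ℂ X B).symm.toContinuousLinearMap.comp
    (ContinuousLinearMap.inr ℂ X B)

@[simp] lemma equiv_inl1 (x : X) :
    WithLp.equiv 1 (X × B) (inl1 X B x) = (x, 0) := by
  simp [inl1]

@[simp] lemma equiv_inr1 (φ : B) :
    WithLp.equiv 1 (X × B) (inr1 X B φ) = (0, φ) := by
  simp [inr1]

lemma decomp1 (u : WithLp 1 (X × B)) :
    u = inl1 X B (WithLp.equiv 1 (X × B) u).1 + inr1 X B (WithLp.equiv 1 (X × B) u).2 := by
  apply (WithLp.equiv 1 (X × B)).injective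
  ext <;> simp [inl1, inr1]

lemma mem_sndZero_iff (u : WithLp 1 (X × B)) :
    u ∈ sndZero X B ↔ (WithLp.equiv 1 (X × B) u).2 = 0 := by
  simp [sndZero, Submodule.mem_prod]

end prodmaps

set_option maxHeartbeats 2000000 in
/-- Let `B` be a Banach algebra and `X` a right Banach `B`-module
whose induced right `B**`-module action on `X**` (the map `modAct sm`) is not Arens
regular: there is `p ∈ X**` for which `m ↦ p·m` is not weak*-weak* continuous
(continuity into the weak* topology being tested against every `f ∈ X*`).
Then `B_X = X ⊕₁ B` is not Arens regular.  In particular, if moreover `B` is Arens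
regular, then with `J = X × {0}` the algebra `B_X` contains a closed two-sided ideal
`J` such that `J` and `B_X / J` are Arens regular, while `B_X` is not:
Arens regularity is not a three-space property. -/
theorem statement12
    {X B : Type*} [NormedAddCommGroup X] [NormedSpace ℂ X] [CompleteSpace X]
    [NormedAddCommGroup B] [NormedSpace ℂ B] [CompleteSpace B]
    (mB : B →L[ℂ] B →L[ℂ] B) (hB : IsBanachAlgebra mB)
    (sm : X →L[ℂ] B →L[ℂ] X)
    (hsm_assoc : ∀ (x : X) (φ ψ : B), sm x (mB φ ψ) = sm (sm x φ) ψ)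
    (hsm_norm : ∀ (x : X) (φ : B), ‖sm x φ‖ ≤ ‖x‖ * ‖φ‖)
    (mBX : WithLp 1 (X × B) →L[ℂ] WithLp 1 (X × B) →L[ℂ] WithLp 1 (X × B))
    (hmBX : ∀ u v : WithLp 1 (X × B),
      WithLp.equiv 1 (X × B) (mBX u v) =
        (sm (WithLp.equiv 1 (X × B) u).1 (WithLp.equiv 1 (X × B) v).2,
         mB (WithLp.equiv 1 (X × B) u).2 (WithLp.equiv 1 (X × B) v).2))
    -- the induced module action of `B**` on `X**` is not Arens regular:
    (hirr : ∃ p : Bidual X, ¬ ∀ f : StrongDual ℂ X,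
      Continuous fun m : WeakDual ℂ (StrongDual ℂ B) =>
        modAct sm p (WeakDual.toStrongDual m) f) :
    ¬ ArensRegular mBX ∧
    (ArensRegular mB →
      IsClosed (sndZero X B : Set (WithLp 1 (X × B))) ∧
      IsTwoSidedIdeal mBX (sndZero X B : Set (WithLp 1 (X × B))) ∧
      (∀ (mJ : ↥(sndZero X B) →L[ℂ] ↥(sndZero X B) →L[ℂ] ↥(sndZero X B)),
        (∀ u v : ↥(sndZero X B), (mJ u v : WithLp 1 (X × B)) = mBX ↑u ↑v) →
        ArensRegular mJ) ∧
      ∀ (C : Type*) [NormedAddCommGroup C] [NormedSpace ℂ C] [CompleteSpace C]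
        (mC : C →L[ℂ] C →L[ℂ] C) (π : WithLp 1 (X × B) →L[ℂ] C),
        Function.Surjective π →
        (∀ u : WithLp 1 (X × B), π u = 0 ↔ u ∈ sndZero X B) →
        (∀ u v : WithLp 1 (X × B), π (mBX u v) = mC (π u) (π v)) →
        (∀ c : C, ‖c‖ = sInf {r : ℝ | ∃ u : WithLp 1 (X × B), π u = c ∧ ‖u‖ = r}) →
        ArensRegular mC) := by
  have hfst : ∀ u v : WithLp 1 (X × B),
      (WithLp.equiv 1 (X × B) (mBX u v)).1 =
        sm (WithLp.equiv 1 (X × B) u).1 (WithLp.equiv 1 (X × B) v).2 := by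
    intro u v; rw [hmBX]
  have hsnd : ∀ u v : WithLp 1 (X × B),
      (WithLp.equiv 1 (X × B) (mBX u v)).2 =
        mB (WithLp.equiv 1 (X × B) u).2 (WithLp.equiv 1 (X × B) v).2 := by
    intro u v; rw [hmBX]
  constructor
  · -- `B_X` is not Arens regular
    intro hreg
    obtain ⟨p, hp⟩ := hirr
    push_neg at hp
    obtain ⟨f, hf⟩ := hp
    apply hf
    set e := WithLp.prodContinuousLinearEquiv 1 ℂ X B with he
    set F : StrongDual ℂ (WithLp 1 (X × B)) :=
      f.comp ((ContinuousLinearMap.fst ℂ X B).comp e.toContinuousLinearMap) with hF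
    set P : Bidual (WithLp 1 (X × B)) := bidualMap (inl1 X B) p with hP
    set h : StrongDual ℂ B :=
      p.comp ((ContinuousLinearMap.compL ℂ X X ℂ f).comp sm.flip) with hh
    have hFval : ∀ (x : X) (ψ : B), F (mBX (inl1 X B x) (inr1 X B ψ)) = f (sm x ψ) := by
      intro x ψ
      have : F (mBX (inl1 X B x) (inr1 X B ψ)) =
          f ((WithLp.equiv 1 (X × B) (mBX (inl1 X B x) (inr1 X B ψ))).1) := rfl
      rw [this, hfst]
      simp [inl1, inr1]
    have key : ∀ n : Bidual B, modAct sm p n f = n h := by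
      intro n
      have hA1 : ∀ x : X,
          precomp (inr1 X B) (fodot mBX F (inl1 X B x)) = fodot sm f x := by
        intro x; ext ψ
        simp only [precomp_apply, fodot_apply]
        exact hFval x ψ
      have hA : precomp (inl1 X B) (mdot mBX (bidualMap (inr1 X B) n) F)
          = mdot sm n f := by
        ext x
        simp only [precomp_apply, mdot_apply, bidualMap_apply, hA1]
      have e1 : arens1 mBX P (bidualMap (inr1 X B) n) F = modAct sm p n f := by
        simp only [arens1, modAct_apply, hP, bidualMap_apply, hA]
      have hB1 : ∀ ψ : B,
          precomp (inl1 X B) (fodot mBX.flip F (inr1 X B ψ)) = f.comp (sm.flip ψ) := by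
        intro ψ; ext x
        simp only [precomp_apply, fodot_apply, ContinuousLinearMap.flip_apply,
          ContinuousLinearMap.comp_apply]
        exact hFval x ψ
      have hB : precomp (inr1 X B) (mdot mBX.flip P F)
          = h := by
        ext ψ
        simp only [precomp_apply, mdot_apply, hP, bidualMap_apply, hB1, hh,
          ContinuousLinearMap.comp_apply, ContinuousLinearMap.compL_apply]
      have e2 : arens2 mBX P (bidualMap (inr1 X B) n) F = n h := by
        simp only [arens2, modAct_apply, bidualMap_apply, hB]
      rw [← e1, hreg, e2]
    have : (fun m : WeakDual ℂ (StrongDual ℂ B) =>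
        modAct sm p (WeakDual.toStrongDual m) f) = fun m => m h :=
      funext fun m => key _
    rw [this]
    exact WeakDual.eval_continuous h
  · -- the three-space data
    intro hBreg
    refine ⟨?_, ?_, ?_, ?_⟩
    · -- closedness of `J`
      have : (sndZero X B : Set (WithLp 1 (X × B))) =
          (fun u => (WithLp.equiv 1 (X × B) u).2) ⁻¹' {0} := by
        ext u
        simp [mem_sndZero_iff]
      rw [this]
      have hc : Continuous fun u : WithLp 1 (X × B) => (WithLp.equiv 1 (X × B) u).2 :=
        (continuous_snd.comp (WithLp.prodContinuousLinearEquiv 1 ℂ X B).continuous)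
      exact isClosed_singleton.preimage hc
    · -- `J` is a two-sided ideal
      intro u v hu
      have hu' : (WithLp.equiv 1 (X × B) u).2 = 0 := (mem_sndZero_iff X B u).mp hu
      constructor
      · rw [SetLike.mem_coe, mem_sndZero_iff, hsnd, hu', map_zero]
        rfl
      · rw [SetLike.mem_coe, mem_sndZero_iff, hsnd, hu', map_zero]
    · -- `J` with the restricted product is Arens regular (the product is zero)
      intro mJ hmJ
      have hzero : ∀ u v : ↥(sndZero X B), mJ u v = 0 := by
        intro u v
        have hv : (WithLp.equiv 1 (X × B) (v : WithLp 1 (X × B))).2 = 0 :=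
          (mem_sndZero_iff X B _).mp v.2
        have : mBX (u : WithLp 1 (X × B)) (v : WithLp 1 (X × B)) = 0 := by
          apply (WithLp.equiv 1 (X × B)).injective
          rw [hmBX, hv]
          simp
        have h0 : (mJ u v : WithLp 1 (X × B)) = 0 := by rw [hmJ u v, this]
        exact Subtype.ext h0
      intro m n
      have hfod : ∀ (g : StrongDual ℂ ↥(sndZero X B)) (u : ↥(sndZero X B)),
          fodot mJ g u = 0 := by
        intro g u; ext v; simp [hzero]
      have hfod' : ∀ (g : StrongDual ℂ ↥(sndZero X B)) (u : ↥(sndZero X B)),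
          fodot mJ.flip g u = 0 := by
        intro g u; ext v; simp [ContinuousLinearMap.flip_apply, hzero]
      ext g
      have h1 : arens1 mJ m n g = 0 := by
        have : mdot mJ n g = 0 := by ext u; simp [hfod]
        simp [arens1, this]
      have h2 : arens2 mJ m n g = 0 := by
        have : mdot mJ.flip m g = 0 := by ext u; simp [hfod']
        simp [arens2, this]
      rw [h1, h2]
    · -- the quotient is Arens regular
      intro C _ _ _ mC π hπsurj hπker hπmul _
      set σ : B →L[ℂ] C := π.comp (inr1 X B) with hσdef
      have hσ : ∀ φ ψ : B, mC (σ φ) (σ ψ) = σ (mB φ ψ) := by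
        intro φ ψ
        have h1 : mBX (inr1 X B φ) (inr1 X B ψ) = inr1 X B (mB φ ψ) := by
          apply (WithLp.equiv 1 (X × B)).injective
          rw [hmBX]
          simp [inl1, inr1]
        calc mC (σ φ) (σ ψ) = π (mBX (inr1 X B φ) (inr1 X B ψ)) := (hπmul _ _).symm
          _ = σ (mB φ ψ) := by rw [h1]; rfl
      have hker : σ.ker = ⊥ := by
        rw [LinearMap.ker_eq_bot']
        intro φ hφ
        have : inr1 X B φ ∈ sndZero X B := (hπker _).mp hφ
        have := (mem_sndZero_iff X B _).mp this
        simpa [inr1] using this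
      have hrange : σ.range = ⊤ := by
        rw [LinearMap.range_eq_top]
        intro c
        obtain ⟨u, rfl⟩ := hπsurj c
        refine ⟨(WithLp.equiv 1 (X × B) u).2, ?_⟩
        have hmem : inl1 X B (WithLp.equiv 1 (X × B) u).1 ∈ sndZero X B := by
          rw [mem_sndZero_iff]; simp [inl1]
        have h0 : π (inl1 X B (WithLp.equiv 1 (X × B) u).1) = 0 := (hπker _).mpr hmem
        calc σ (WithLp.equiv 1 (X × B) u).2
            = 0 + π (inr1 X B (WithLp.equiv 1 (X × B) u).2) := by
              rw [zero_add]; rfl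
          _ = π (inl1 X B (WithLp.equiv 1 (X × B) u).1)
              + π (inr1 X B (WithLp.equiv 1 (X × B) u).2) := by rw [h0]
          _ = π u := by rw [← map_add, ← decomp1]
      set e' : B ≃L[ℂ] C := ContinuousLinearEquiv.ofBijective σ hker hrange with he'
      have hsurj : Function.Surjective (bidualMap σ) := by
        intro M
        refine ⟨M.comp (precomp (e'.symm : C →L[ℂ] B)), ?_⟩
        ext G
        simp only [bidualMap_apply, ContinuousLinearMap.comp_apply]
        congr 1
        ext c
        simp only [precomp_apply, ContinuousLinearMap.coe_coe]
        congr 1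
        exact ContinuousLinearEquiv.ofBijective_apply_symm_apply σ hker hrange c
      exact arensRegular_of_morphism mB mC σ hσ hsurj hBreg

end ArensNote
end
end

section
/- Let B be a Banach algebra whose canonical image is a left ideal in (B**,□), and let X be a right Banach B-module such that for every φ ∈ B the map f ↦ φ·f : X* → X* is weak*-to-weak continuous, where ⟨φ·f, x⟩ = ⟨f, xφ⟩ (f∈X*, x∈X). Then the canonical image of B_X is a left ideal in (B_X)** with its first Arens product. -/
noncomputable section

open NormedSpace Filter Topology

namespace ArensNote

variable {X A : Type*} [NormedAddCommGroup X] [NormedSpace ℂ X]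
  [NormedAddCommGroup A] [NormedSpace ℂ A]

private lemma exists_eval_of_weakStarContinuous {X : Type*} [NormedAddCommGroup X] [NormedSpace ℂ X]
    (L : StrongDual ℂ X →ₗ[ℂ] ℂ)
    (hL : Continuous fun f : WeakDual ℂ X => L (WeakDual.toStrongDual f)) :
    ∃ z : X, ∀ f : StrongDual ℂ X, L f = f z := by
  classical
  have h0 : ∀ᶠ f in 𝓝 (0 : WeakDual ℂ X), ‖L (WeakDual.toStrongDual f)‖ < 1 := by
    have ht := (hL.tendsto 0).norm
    have hz : ‖L (WeakDual.toStrongDual (0 : WeakDual ℂ X))‖ = 0 := by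
      simp [map_zero]
    rw [hz] at ht
    exact ht.eventually_lt_const one_pos
  have hb := LinearMap.hasBasis_weakBilin (topDualPairing ℂ X)
  obtain ⟨U, hU, hsub⟩ := hb.eventually_iff.mp h0
  obtain ⟨s, r, hr, rfl⟩ := (SeminormFamily.basisSets_iff _).mp hU
  -- L vanishes on the common kernel of evaluations at points of s
  have hker : ∀ f : StrongDual ℂ X, (∀ x ∈ s, f x = 0) → L f = 0 := by
    intro f hf
    by_contra hLf
    have hmem : ∀ c : ℂ, (c • f : StrongDual ℂ X) ∈
        (s.sup (LinearMap.toSeminormFamily (topDualPairing ℂ X))).ball 0 r := by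
      intro c
      rw [Seminorm.mem_ball_zero]
      refine Seminorm.finset_sup_apply_lt hr ?_
      intro x hx
      have hz : ((topDualPairing ℂ X) (c • f)) x = 0 := by
        simp [topDualPairing_apply, hf x hx]
      simpa [LinearMap.toSeminormFamily_apply, topDualPairing_apply, hf x hx] using hr
    have hlt : ∀ c : ℂ, ‖c‖ * ‖L f‖ < 1 := by
      intro c
      have := hsub (hmem c)
      change ‖L (c • f)‖ < 1 at this
      simpa [map_smul, norm_mul] using this
    have h2 := hlt ((2 / ‖L f‖ : ℝ) : ℂ)
    have hn : (0:ℝ) < ‖L f‖ := norm_pos_iff.mpr hLf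
    rw [Complex.norm_real, Real.norm_of_nonneg (by positivity), div_mul_cancel₀] at h2
    · linarith
    · exact hn.ne'
  -- evaluation maps
  let ev : X → (StrongDual ℂ X →ₗ[ℂ] ℂ) := fun x => (topDualPairing ℂ X).flip x
  have hspan : L ∈ Submodule.span ℂ (Set.range fun i : ↥s => ev ↑i) := by
    apply mem_span_of_iInf_ker_le_ker
    intro f hf
    rw [Submodule.mem_iInf] at hf
    refine hker f ?_
    intro x hx
    exact hf ⟨x, hx⟩
  obtain ⟨c, hc⟩ := (Finsupp.mem_span_range_iff_exists_finsupp).mp hspan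
  refine ⟨c.sum fun i a => a • (i : X), ?_⟩
  intro f
  have := congrArg (fun T : StrongDual ℂ X →ₗ[ℂ] ℂ => T f) hc
  simp only [Finsupp.sum, LinearMap.coe_sum, Finset.sum_apply, LinearMap.smul_apply] at this ⊢
  rw [← this]
  rw [map_sum]
  exact Finset.sum_congr rfl fun i _ => by
    simp [ev, topDualPairing_apply, map_smul, smul_eq_mul]

/-- Let `B` be a Banach algebra whose canonical image is a left
ideal in `(B**, □)`, and let `X` be a right Banach `B`-module such that for every
`φ ∈ B` the map `f ↦ φ·f : X* → X*`, `⟨φ·f, x⟩ = ⟨f, xφ⟩` (i.e. `f ↦ f ∘ (sm · φ)`),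
is weak*-to-weak continuous (continuity into the weak topology being tested against
every `g ∈ X**`).  Then the canonical image of `B_X` is a left ideal in `(B_X)**`
with its first Arens product. -/
theorem statement15
    {X B : Type*} [NormedAddCommGroup X] [NormedSpace ℂ X] [CompleteSpace X]
    [NormedAddCommGroup B] [NormedSpace ℂ B] [CompleteSpace B]
    (mB : B →L[ℂ] B →L[ℂ] B) (hB : IsBanachAlgebra mB)
    (hBlideal : ∀ (b : B) (m : Bidual B), arens1 mB m (iota B b) ∈ Set.range (iota B))
    (sm : X →L[ℂ] B →L[ℂ] X)
    (hsm_assoc : ∀ (x : X) (φ ψ : B), sm x (mB φ ψ) = sm (sm x φ) ψ)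
    (hsm_norm : ∀ (x : X) (φ : B), ‖sm x φ‖ ≤ ‖x‖ * ‖φ‖)
    -- weak*-to-weak continuity of `f ↦ φ·f`:
    (hcont : ∀ (φ : B) (g : Bidual X),
      Continuous fun f : WeakDual ℂ X => g ((WeakDual.toStrongDual f).comp (sm.flip φ)))
    (mBX : WithLp 1 (X × B) →L[ℂ] WithLp 1 (X × B) →L[ℂ] WithLp 1 (X × B))
    (hmBX : ∀ u v : WithLp 1 (X × B),
      WithLp.equiv 1 (X × B) (mBX u v) =
        (sm (WithLp.equiv 1 (X × B) u).1 (WithLp.equiv 1 (X × B) v).2,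
         mB (WithLp.equiv 1 (X × B) u).2 (WithLp.equiv 1 (X × B) v).2)) :
    ∀ (u : WithLp 1 (X × B)) (m : Bidual (WithLp 1 (X × B))),
      arens1 mBX m (iota (WithLp 1 (X × B)) u) ∈ Set.range (iota (WithLp 1 (X × B))) := by
  intro u m
  classical
  let E := WithLp.prodContinuousLinearEquiv 1 ℂ X B
  let pX : WithLp 1 (X × B) →L[ℂ] X :=
    (ContinuousLinearMap.fst ℂ X B).comp (E : WithLp 1 (X × B) →L[ℂ] X × B)
  let pB : WithLp 1 (X × B) →L[ℂ] B :=
    (ContinuousLinearMap.snd ℂ X B).comp (E : WithLp 1 (X × B) →L[ℂ] X × B)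
  let jX : X →L[ℂ] WithLp 1 (X × B) :=
    (E.symm : X × B →L[ℂ] WithLp 1 (X × B)).comp (ContinuousLinearMap.inl ℂ X B)
  let jB : B →L[ℂ] WithLp 1 (X × B) :=
    (E.symm : X × B →L[ℂ] WithLp 1 (X × B)).comp (ContinuousLinearMap.inr ℂ X B)
  set ψ : B := (WithLp.equiv 1 (X × B) u).2 with hψ
  have hmdot : ∀ F : StrongDual ℂ (WithLp 1 (X × B)),
      mdot mBX (iota _ u) F
        = ((F.comp jX).comp (sm.flip ψ)).comp pX + ((F.comp jB).comp (mB.flip ψ)).comp pB := by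
    intro F
    ext v
    have h1 : mBX v u = jX (sm (pX v) ψ) + jB (mB (pB v) ψ) := by
      apply (WithLp.equiv 1 (X × B)).injective
      rw [hmBX v u]
      simp [jX, jB, pX, pB, E, WithLp.ofLp_add, Prod.ext_iff]
      exact ⟨rfl, rfl⟩
    show (iota _ u) (fodot mBX F v) = _
    rw [dual_def, fodot_apply, h1, map_add]
    rfl
  let NX : Bidual X :=
    m.comp ((ContinuousLinearMap.compL ℂ (WithLp 1 (X × B)) X ℂ).flip pX)
  let NB : Bidual B :=
    m.comp ((ContinuousLinearMap.compL ℂ (WithLp 1 (X × B)) B ℂ).flip pB)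
  have hNX : ∀ h : StrongDual ℂ X, NX h = m (h.comp pX) := fun h => rfl
  have hNB : ∀ h : StrongDual ℂ B, NB h = m (h.comp pB) := fun h => rfl
  -- the X-component functional is weak*-continuous, hence an evaluation
  let L : StrongDual ℂ X →ₗ[ℂ] ℂ :=
    (NX.comp ((ContinuousLinearMap.compL ℂ X X ℂ).flip (sm.flip ψ))).toLinearMap
  have hLc : Continuous fun f : WeakDual ℂ X => L (WeakDual.toStrongDual f) := hcont ψ NX
  obtain ⟨z, hz⟩ := exists_eval_of_weakStarContinuous L hLc
  have hz' : ∀ f : StrongDual ℂ X, NX (f.comp (sm.flip ψ)) = f z := fun f => hz f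
  -- the B-component is handled by the left-ideal hypothesis
  obtain ⟨χ, hχ⟩ := hBlideal ψ NB
  have hχ' : ∀ g : StrongDual ℂ B, NB (g.comp (mB.flip ψ)) = g χ := by
    intro g
    have h2 : mdot mB (iota B ψ) g = g.comp (mB.flip ψ)  := by
      ext φ
      simp [mdot_apply, fodot_apply]
    have h3 := congrArg (fun T : Bidual B => T g) hχ
    simpa [arens1, modAct_apply, h2] using h3.symm
  refine ⟨jX z + jB χ, ?_⟩
  ext F
  show F (jX z + jB χ) = m (mdot mBX (iota _ u) F)
  rw [hmdot F, map_add, map_add, ← hNX, ← hNB, hz' (F.comp jX), hχ' (F.comp jB)]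
  rfl

end ArensNote
end
end

section
/- Let B be a Banach algebra whose canonical image is a right ideal in (B**,□), and let X = B* be the right Banach B-module with the natural action ⟨xφ, ψ⟩ = ⟨x, φψ⟩ (x∈B*, φ,ψ∈B). Then the canonical image of the Banach algebra B_X = B* ⊕₁ B, with product (x,φ)(y,ψ) = (xψ, φψ), is a right ideal in (B_X)** (first Arens product) if and only if B is Arens regular. -/
noncomputable section

open NormedSpace Filter Topology

namespace ArensNote

variable {X A : Type*} [NormedAddCommGroup X] [NormedSpace ℂ X]
  [NormedAddCommGroup A] [NormedSpace ℂ A]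

section statement16aux

variable {B : Type*} [NormedAddCommGroup B] [NormedSpace ℂ B]

lemma aux_arens1_iota_apply (mA : B →L[ℂ] B →L[ℂ] B) (b : B) (m : Bidual B) (f : StrongDual ℂ B) :
    arens1 mA (iota B b) m f = m (fodot mA f b) := rfl

lemma aux_arens1_apply (mA : B →L[ℂ] B →L[ℂ] B) (m f : Bidual B) (x : StrongDual ℂ B) :
    arens1 mA m f x = m (mdot mA f x) := rfl

lemma aux_arens2_apply (mA : B →L[ℂ] B →L[ℂ] B) (m f : Bidual B) (x : StrongDual ℂ B) :
    arens2 mA m f x = f (mdot mA.flip m x) := rfl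

lemma aux_mdot_eq_fodot (mB : B →L[ℂ] B →L[ℂ] B)
    (sm : StrongDual ℂ B →L[ℂ] B →L[ℂ] StrongDual ℂ B)
    (hsm : ∀ (x : StrongDual ℂ B) (φ ψ : B), sm x φ ψ = x (mB φ ψ))
    (f : Bidual B) (x : StrongDual ℂ B) :
    mdot mB f x = fodot sm f x := by
  ext ψ
  have h : fodot mB x ψ = sm x ψ := by
    ext χ; simp [hsm]
  show f (fodot mB x ψ) = f (sm x ψ)
  rw [h]

lemma aux_arens1_eval (mB : B →L[ℂ] B →L[ℂ] B)
    (sm : StrongDual ℂ B →L[ℂ] B →L[ℂ] StrongDual ℂ B)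
    (hsm : ∀ (x : StrongDual ℂ B) (φ ψ : B), sm x φ ψ = x (mB φ ψ))
    (m f : Bidual B) (x : StrongDual ℂ B) :
    arens1 mB m f x = m (fodot sm f x) := by
  rw [aux_arens1_apply, aux_mdot_eq_fodot mB sm hsm]

end statement16aux

set_option maxHeartbeats 2000000 in
/-- Let `B` be a Banach algebra whose canonical image is a right
ideal in `(B**, □)`, and let `X = B*` be the right Banach `B`-module with the natural
action `⟨xφ, ψ⟩ = ⟨x, φψ⟩`.  Then the canonical image of `B_X = B* ⊕₁ B` is a right
ideal in `(B_X)**` (first Arens product) if and only if `B` is Arens regular. -/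
theorem statement16
    {B : Type*} [NormedAddCommGroup B] [NormedSpace ℂ B] [CompleteSpace B]
    (mB : B →L[ℂ] B →L[ℂ] B) (hB : IsBanachAlgebra mB)
    (hBrideal : ∀ (b : B) (m : Bidual B), arens1 mB (iota B b) m ∈ Set.range (iota B))
    -- the natural right action of `B` on `X = B*`:
    (sm : StrongDual ℂ B →L[ℂ] B →L[ℂ] StrongDual ℂ B)
    (hsm : ∀ (x : StrongDual ℂ B) (φ ψ : B), sm x φ ψ = x (mB φ ψ))
    (mBX : WithLp 1 (StrongDual ℂ B × B) →L[ℂ] WithLp 1 (StrongDual ℂ B × B) →L[ℂ]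
      WithLp 1 (StrongDual ℂ B × B))
    (hmBX : ∀ u v : WithLp 1 (StrongDual ℂ B × B),
      WithLp.equiv 1 (StrongDual ℂ B × B) (mBX u v) =
        (sm (WithLp.equiv 1 (StrongDual ℂ B × B) u).1 (WithLp.equiv 1 (StrongDual ℂ B × B) v).2,
         mB (WithLp.equiv 1 (StrongDual ℂ B × B) u).2 (WithLp.equiv 1 (StrongDual ℂ B × B) v).2)) :
    (∀ (u : WithLp 1 (StrongDual ℂ B × B)) (m : Bidual (WithLp 1 (StrongDual ℂ B × B))),
      arens1 mBX (iota (WithLp 1 (StrongDual ℂ B × B)) u) m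
        ∈ Set.range (iota (WithLp 1 (StrongDual ℂ B × B))))
      ↔ ArensRegular mB := by
  classical
  let e : WithLp 1 (StrongDual ℂ B × B) ≃L[ℂ] StrongDual ℂ B × B :=
    WithLp.prodContinuousLinearEquiv 1 ℂ (StrongDual ℂ B) B
  let inX : StrongDual ℂ B →L[ℂ] WithLp 1 (StrongDual ℂ B × B) :=
    e.symm.toContinuousLinearMap.comp (ContinuousLinearMap.inl ℂ (StrongDual ℂ B) B)
  let inB : B →L[ℂ] WithLp 1 (StrongDual ℂ B × B) :=
    e.symm.toContinuousLinearMap.comp (ContinuousLinearMap.inr ℂ (StrongDual ℂ B) B)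
  have heinX : ∀ z : StrongDual ℂ B, e (inX z) = (z, 0) := by
    intro z; simp [inX]
  have heinB : ∀ ψ : B, e (inB ψ) = (0, ψ) := by
    intro ψ; simp [inB]
  have hdecomp : ∀ w : WithLp 1 (StrongDual ℂ B × B), inX (e w).1 + inB (e w).2 = w := by
    intro w
    apply e.injective
    rw [map_add, heinX, heinB]
    ext <;> simp
  have hFdecomp : ∀ (F : StrongDual ℂ (WithLp 1 (StrongDual ℂ B × B)))
      (w : WithLp 1 (StrongDual ℂ B × B)), F (inX (e w).1) + F (inB (e w).2) = F w := by
    intro F w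
    rw [← map_add, hdecomp]
  have hmulc : ∀ u v : WithLp 1 (StrongDual ℂ B × B),
      e (mBX u v) = (sm (e u).1 (e v).2, mB (e u).2 (e v).2) := by
    intro u v
    exact hmBX u v
  constructor
  · -- right ideal in (B_X)** ⟹ Arens regular
    intro H m n
    ext x
    let M : Bidual (WithLp 1 (StrongDual ℂ B × B)) :=
      m.comp ((ContinuousLinearMap.compL ℂ B (WithLp 1 (StrongDual ℂ B × B)) ℂ).flip inB)
    obtain ⟨w, hw⟩ := H (inX x) M
    have hM : ∀ F : StrongDual ℂ (WithLp 1 (StrongDual ℂ B × B)),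
        arens1 mBX (iota _ (inX x)) M F = arens1 mB m (F.comp inX) x := by
      intro F
      have h2 : (fodot mBX F (inX x)).comp inB = fodot sm (F.comp inX) x := by
        ext ψ
        show F (mBX (inX x) (inB ψ)) = F (inX (sm x ψ))
        congr 1
        apply e.injective
        rw [hmulc, heinX, heinB, heinX]
        simp
      have h1 : arens1 mBX (iota _ (inX x)) M F = m ((fodot mBX F (inX x)).comp inB) := rfl
      rw [h1, h2, aux_arens1_eval mB sm hsm]
    let pX : WithLp 1 (StrongDual ℂ B × B) →L[ℂ] StrongDual ℂ B :=
      (ContinuousLinearMap.fst ℂ (StrongDual ℂ B) B).comp e.toContinuousLinearMap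
    have hkey : ∀ g : Bidual B, arens1 mB m g x = g (pX w) := by
      intro g
      have hFX : (g.comp pX).comp inX = g := by
        ext z
        show g (pX (inX z)) = g z
        congr 1
      have := hM (g.comp pX)
      rw [hFX] at this
      rw [← this, ← hw]
      rfl
    have hy : pX w = mdot mB.flip m x := by
      ext φ
      have h := hkey (iota B φ)
      have h1 : arens1 mB m (iota B φ) x = m (fodot sm (iota B φ) x) :=
        aux_arens1_eval mB sm hsm m (iota B φ) x
      have h2 : fodot sm (iota B φ) x = fodot mB.flip x φ := by
        ext ψ
        show sm x ψ φ = x (mB.flip φ ψ)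
        rw [hsm]
        rfl
      rw [h1, h2] at h
      exact h.symm
    rw [aux_arens2_apply, ← hy, hkey n]
  · -- Arens regular ⟹ right ideal in (B_X)**
    intro reg u M
    let pB : WithLp 1 (StrongDual ℂ B × B) →L[ℂ] B :=
      (ContinuousLinearMap.snd ℂ (StrongDual ℂ B) B).comp e.toContinuousLinearMap
    have hpB : ∀ v, pB v = (e v).2 := fun v => rfl
    let n : Bidual B :=
      M.comp ((ContinuousLinearMap.compL ℂ (WithLp 1 (StrongDual ℂ B × B)) B ℂ).flip pB)
    have hn : ∀ g : StrongDual ℂ B, n g = M (g.comp pB) := fun g => rfl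
    obtain ⟨χ, hχ⟩ := hBrideal (e u).2 n
    refine ⟨inX (mdot mB.flip n (e u).1) + inB χ, ?_⟩
    ext F
    have hsplit : fodot mBX F u =
        (fodot sm (F.comp inX) (e u).1 + fodot mB (F.comp inB) (e u).2).comp pB := by
      ext v
      show F (mBX u v) =
        (F.comp inX) (sm (e u).1 (pB v)) + (F.comp inB) (mB (e u).2 (pB v))
      rw [← hFdecomp F (mBX u v), hmulc u v, hpB]
      rfl
    have hRHS : arens1 mBX (iota _ u) M F =
        n (fodot sm (F.comp inX) (e u).1) + n (fodot mB (F.comp inB) (e u).2) := by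
      have h1 : arens1 mBX (iota _ u) M F = M (fodot mBX F u) := rfl
      rw [h1, hsplit, ← map_add]
      rfl
    have hterm1 : n (fodot sm (F.comp inX) (e u).1) = F (inX (mdot mB.flip n (e u).1)) := by
      have h1 : arens1 mB n (F.comp inX) (e u).1 = n (fodot sm (F.comp inX) (e u).1) :=
        aux_arens1_eval mB sm hsm n (F.comp inX) (e u).1
      have h2 : arens1 mB n (F.comp inX) (e u).1 = arens2 mB n (F.comp inX) (e u).1 := by
        rw [reg n (F.comp inX)]
      rw [← h1, h2, aux_arens2_apply]
      rfl
    have hterm2 : n (fodot mB (F.comp inB) (e u).2) = F (inB χ) := by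
      have h1 : arens1 mB (iota B (e u).2) n (F.comp inB) =
          n (fodot mB (F.comp inB) (e u).2) := rfl
      rw [← h1, ← hχ]
      rfl
    have hLHS : iota (WithLp 1 (StrongDual ℂ B × B)) (inX (mdot mB.flip n (e u).1) + inB χ) F =
        F (inX (mdot mB.flip n (e u).1)) + F (inB χ) := by
      show F (inX (mdot mB.flip n (e u).1) + inB χ) = _
      rw [map_add]
    rw [hLHS, hRHS, hterm1, hterm2]

end ArensNote
end
end

section
/- Let B be a Banach algebra with a right identity whose canonical image is a right ideal in (B**,□), and let X = B* be the left Banach B-module with the natural action ⟨φx, ψ⟩ = ⟨x, ψφ⟩ (x∈B*, φ,ψ∈B). Then the canonical image of the Banach algebra _X B = B* ⊕₁ B, with product (x,φ)(y,ψ) = (φy, φψ), is a right ideal in (_X B)** (first Arens product) if and only if B is reflexive. -/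
noncomputable section

open NormedSpace Filter Topology

namespace ArensNote

variable {X A : Type*} [NormedAddCommGroup X] [NormedSpace ℂ X]
  [NormedAddCommGroup A] [NormedSpace ℂ A]

section aux
variable {E F : Type*} [NormedAddCommGroup E] [NormedSpace ℂ E]
  [NormedAddCommGroup F] [NormedSpace ℂ F]

/-- Transpose of a continuous linear map. -/
def transp (T : E →L[ℂ] F) : StrongDual ℂ F →L[ℂ] StrongDual ℂ E :=
  (ContinuousLinearMap.compL ℂ E F ℂ).flip T

@[simp] lemma transp_apply (T : E →L[ℂ] F) (f : StrongDual ℂ F) (x : E) :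
    transp T f x = f (T x) := rfl

lemma dual_surj_of_surj (h : Function.Surjective (iota E)) :
    Function.Surjective (iota (StrongDual ℂ E)) := by
  intro p
  refine ⟨p.comp (iota E), ?_⟩
  ext G
  obtain ⟨b, rfl⟩ := h G
  rfl

lemma sep_aux {G : Type*} [NormedAddCommGroup G] [NormedSpace ℂ G] (S : Submodule ℂ G)
    (hclosed : IsClosed (S : Set G)) (m : G) (hm' : m ∉ S) :
    ∃ Fn : StrongDual ℂ G, (∀ x ∈ S, Fn x = 0) ∧ Fn m ≠ 0 := by
  have hmk : (Submodule.Quotient.mk m : G ⧸ S) ≠ 0 := by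
    simpa [Submodule.Quotient.mk_eq_zero] using hm'
  obtain ⟨g, _, hg2⟩ := exists_dual_vector ℂ (Submodule.Quotient.mk m : G ⧸ S)
    (norm_ne_zero_iff.mpr hmk)
  let mkC : G →L[ℂ] G ⧸ S :=
    LinearMap.mkContinuous S.mkQ 1 (fun x => by
      simpa using Submodule.Quotient.norm_mk_le (S := S) x)
  refine ⟨g.comp mkC, fun x hx => ?_, ?_⟩
  · have : (Submodule.Quotient.mk x : G ⧸ S) = 0 := (Submodule.Quotient.mk_eq_zero S).mpr hx
    show g (Submodule.Quotient.mk x) = 0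
    rw [this, map_zero]
  · show g (Submodule.Quotient.mk m) ≠ 0
    rw [hg2]
    exact Complex.ofReal_ne_zero.mpr (norm_ne_zero_iff.mpr hmk)

lemma surj_of_dual_surj [CompleteSpace E]
    (h : Function.Surjective (iota (StrongDual ℂ E))) : Function.Surjective (iota E) := by
  intro m
  set S : Submodule ℂ (Bidual E) := LinearMap.range (iota E : E →ₗ[ℂ] Bidual E) with hS
  by_contra hm
  have hm' : m ∉ S := fun hmem => hm (by obtain ⟨b, hb⟩ := hmem; exact ⟨b, hb⟩)
  haveI hclosed : IsClosed (S : Set (Bidual E)) := by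
    have hiso : Isometry (iota E) := (inclusionInDoubleDualLi ℂ (E := E)).isometry
    have : (S : Set (Bidual E)) = Set.range (iota E) := by
      ext x; simp [hS, LinearMap.mem_range, Set.mem_range]
    rw [this]
    exact hiso.isClosedEmbedding.isClosed_range
  obtain ⟨Fn, hFnS, hFnm⟩ := sep_aux S hclosed m hm'
  obtain ⟨f, hf⟩ := h Fn
  have hf0 : f = 0 := by
    ext b
    have h1 : Fn (iota E b) = f b := by rw [← hf]; rfl
    have h2 : Fn (iota E b) = 0 := hFnS _ ⟨b, rfl⟩
    simp [← h1, h2]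
  have hFn0 : Fn m = 0 := by rw [← hf, hf0]; simp
  exact hFnm hFn0

/-- inclusion of first factor in `ℓ¹`-sum -/
def pj1 : E →L[ℂ] WithLp 1 (E × F) :=
  ((WithLp.prodContinuousLinearEquiv 1 ℂ E F).symm : E × F →L[ℂ] WithLp 1 (E × F)).comp
    (ContinuousLinearMap.inl ℂ E F)

def pj2 : F →L[ℂ] WithLp 1 (E × F) :=
  ((WithLp.prodContinuousLinearEquiv 1 ℂ E F).symm : E × F →L[ℂ] WithLp 1 (E × F)).comp
    (ContinuousLinearMap.inr ℂ E F)

def pp1 : WithLp 1 (E × F) →L[ℂ] E :=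
  (ContinuousLinearMap.fst ℂ E F).comp
    ((WithLp.prodContinuousLinearEquiv 1 ℂ E F : WithLp 1 (E × F) →L[ℂ] E × F))

def pp2 : WithLp 1 (E × F) →L[ℂ] F :=
  (ContinuousLinearMap.snd ℂ E F).comp
    ((WithLp.prodContinuousLinearEquiv 1 ℂ E F : WithLp 1 (E × F) →L[ℂ] E × F))

lemma pdecomp (v : WithLp 1 (E × F)) : pj1 (pp1 v) + pj2 (pp2 v) = v := by
  apply (WithLp.prodContinuousLinearEquiv 1 ℂ E F).injective
  simp [pj1, pj2, pp1, pp2]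
  rfl

lemma prod_iota_surj (hE : Function.Surjective (iota E))
    (hF : Function.Surjective (iota F)) :
    Function.Surjective (iota (WithLp 1 (E × F))) := by
  intro M
  obtain ⟨x, hx⟩ := hE (M.comp (transp (pp1 (E := E) (F := F))))
  obtain ⟨y, hy⟩ := hF (M.comp (transp (pp2 (E := E) (F := F))))
  refine ⟨pj1 x + pj2 y, ?_⟩
  ext f
  have hfdec : f = transp pp1 (f.comp pj1) + transp pp2 (f.comp pj2) := by
    ext v
    conv_lhs => rw [← pdecomp v]
    simp
  have h1 : (iota E x) (f.comp pj1) = M (transp pp1 (f.comp pj1)) := by rw [hx]; rfl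
  have h2 : (iota F y) (f.comp pj2) = M (transp pp2 (f.comp pj2)) := by rw [hy]; rfl
  calc (iota (WithLp 1 (E × F)) (pj1 x + pj2 y)) f
      = f (pj1 x) + f (pj2 y) := by simp [dual_def]
    _ = (iota E x) (f.comp pj1) + (iota F y) (f.comp pj2) := rfl
    _ = M (transp pp1 (f.comp pj1)) + M (transp pp2 (f.comp pj2)) := by rw [h1, h2]
    _ = M f := by rw [← map_add, ← hfdec]

end aux

/-- Let `B` be a Banach algebra with a right identity whose
canonical image is a right ideal in `(B**, □)`, and let `X = B*` be the left Banach
`B`-module with the natural action `⟨φx, ψ⟩ = ⟨x, ψφ⟩`.  Then the canonical image of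
`_X B = B* ⊕₁ B`, with product `(x, φ)(y, ψ) = (φy, φψ)`, is a right ideal in
`(_X B)**` (first Arens product) if and only if `B` is reflexive. -/
theorem statement17
    {B : Type*} [NormedAddCommGroup B] [NormedSpace ℂ B] [CompleteSpace B]
    (mB : B →L[ℂ] B →L[ℂ] B) (hB : IsBanachAlgebra mB)
    (er : B) (her : ∀ a : B, mB a er = a)
    (hBrideal : ∀ (b : B) (m : Bidual B), arens1 mB (iota B b) m ∈ Set.range (iota B))
    -- the natural left action of `B` on `X = B*`:
    (sm : B →L[ℂ] StrongDual ℂ B →L[ℂ] StrongDual ℂ B)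
    (hsm : ∀ (φ : B) (x : StrongDual ℂ B) (ψ : B), sm φ x ψ = x (mB ψ φ))
    -- the multiplication of `_X B` : `(x, φ)(y, ψ) = (φ y, φψ)`:
    (mXB : WithLp 1 (StrongDual ℂ B × B) →L[ℂ] WithLp 1 (StrongDual ℂ B × B) →L[ℂ]
      WithLp 1 (StrongDual ℂ B × B))
    (hmXB : ∀ u v : WithLp 1 (StrongDual ℂ B × B),
      WithLp.equiv 1 (StrongDual ℂ B × B) (mXB u v) =
        (sm (WithLp.equiv 1 (StrongDual ℂ B × B) u).2 (WithLp.equiv 1 (StrongDual ℂ B × B) v).1,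
         mB (WithLp.equiv 1 (StrongDual ℂ B × B) u).2 (WithLp.equiv 1 (StrongDual ℂ B × B) v).2)) :
    (∀ (u : WithLp 1 (StrongDual ℂ B × B)) (m : Bidual (WithLp 1 (StrongDual ℂ B × B))),
      arens1 mXB (iota (WithLp 1 (StrongDual ℂ B × B)) u) m
        ∈ Set.range (iota (WithLp 1 (StrongDual ℂ B × B))))
      ↔ Function.Surjective (iota B) := by
  constructor
  · intro H
    apply surj_of_dual_surj
    intro p
    let m : Bidual (WithLp 1 (StrongDual ℂ B × B)) :=
      p.comp (transp (pj1 (E := StrongDual ℂ B) (F := B)))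
    let u : WithLp 1 (StrongDual ℂ B × B) := pj2 er
    obtain ⟨w, hw⟩ := H u m
    refine ⟨pp1 w, ?_⟩
    ext g
    have hsmer : ∀ x : StrongDual ℂ B, sm er x = x := by
      intro x
      ext ψ
      rw [hsm, her]
    have key : ∀ x : StrongDual ℂ B, mXB u (pj1 x) = pj1 x := by
      intro x
      apply (WithLp.equiv 1 (StrongDual ℂ B × B)).injective
      rw [hmXB]
      have hu2 : (WithLp.equiv 1 (StrongDual ℂ B × B) u).2 = er := rfl
      have hx1 : (WithLp.equiv 1 (StrongDual ℂ B × B) (pj1 x)).1 = x := rfl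
      have hx2 : (WithLp.equiv 1 (StrongDual ℂ B × B) (pj1 x)).2 = 0 := rfl
      rw [hu2, hx1, hx2, hsmer, map_zero]
      rfl
    have hwf : (g.comp (pp1 (E := StrongDual ℂ B) (F := B))) w
        = m (fodot mXB (g.comp (pp1 (E := StrongDual ℂ B) (F := B))) u) :=
      DFunLike.congr_fun hw (g.comp (pp1 (E := StrongDual ℂ B) (F := B)))
    have htr : transp (pj1 (E := StrongDual ℂ B) (F := B))
        (fodot mXB (g.comp (pp1 (E := StrongDual ℂ B) (F := B))) u) = g := by
      ext x
      show (g.comp (pp1 (E := StrongDual ℂ B) (F := B))) (mXB u (pj1 x)) = g x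
      rw [key x]
      show g (pp1 (pj1 x)) = g x
      congr 1
    calc iota (StrongDual ℂ B) (pp1 w) g
        = (g.comp (pp1 (E := StrongDual ℂ B) (F := B))) w := rfl
      _ = m (fodot mXB (g.comp (pp1 (E := StrongDual ℂ B) (F := B))) u) := hwf
      _ = p (transp (pj1 (E := StrongDual ℂ B) (F := B))
            (fodot mXB (g.comp (pp1 (E := StrongDual ℂ B) (F := B))) u)) := rfl
      _ = p g := by rw [htr]
  · intro h u m
    exact prod_iota_surj (dual_surj_of_surj h) h _


end ArensNote
end
end
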